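/- Let R be a ring that is left Noetherian or right Noetherian. Then the prime radical of the Laurent series ring R((x)) equals {f ∈ R((x)) : every coefficient of f lies in P(R)}, where P(R) is the prime radical of R; that is, P(R((x))) = P(R)((x)). -/

import Mathlib

/-- A two-sided ideal `P` of a ring `S` is prime if it is proper and for all `a, b ∈ S`,
`aSb ⊆ P` implies `a ∈ P` or `b ∈ P`. -/
def IsPrimeTwoSidedIdeal {S : Type*} [Ring S] (P : TwoSidedIdeal S) : Prop :=
  P ≠ ⊤ ∧ ∀ a b : S, (∀ r : S, a * r * b ∈ P) → a ∈ P ∨ b ∈ P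

/-- The prime radical of a ring `S`: the intersection of all prime two-sided ideals. -/
def primeRadicalSet (S : Type*) [Ring S] : Set S :=
  ⋂ P ∈ {P : TwoSidedIdeal S | IsPrimeTwoSidedIdeal P}, (P : Set S)

section Aux

open TwoSidedIdeal

variable {S : Type*} [Ring S]

lemma mem_primeRadicalSet_iff {x : S} :
    x ∈ primeRadicalSet S ↔ ∀ P : TwoSidedIdeal S, IsPrimeTwoSidedIdeal P → x ∈ P := by
  simp [primeRadicalSet]

/-- The prime radical as a two-sided ideal. -/
def pradIdeal (S : Type*) [Ring S] : TwoSidedIdeal S :=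
  sInf {P | IsPrimeTwoSidedIdeal P}

lemma mem_pradIdeal {x : S} : x ∈ pradIdeal S ↔ x ∈ primeRadicalSet S := by
  rw [pradIdeal, TwoSidedIdeal.mem_sInf, mem_primeRadicalSet_iff]
  exact Iff.rfl

/-- For a two-sided ideal `Q` of `S`, the two-sided ideal of Laurent series all of whose
coefficients lie in `Q`. -/
noncomputable def coeffIdeal (Q : TwoSidedIdeal S) : TwoSidedIdeal (LaurentSeries S) :=
  TwoSidedIdeal.mk' {f | ∀ n : ℤ, f.coeff n ∈ Q}
    (fun n => by simp [Q.zero_mem])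
    (fun {x y} hx hy n => by
      simpa using Q.add_mem (hx n) (hy n))
    (fun {x} hx n => by
      simpa using Q.neg_mem (hx n))
    (fun {x y} hy n => by
      rw [HahnSeries.coeff_mul]
      exact TwoSidedIdeal.finsetSum_mem _ _ _ fun ij _ => Q.mul_mem_left _ _ (hy ij.2))
    (fun {x y} hx n => by
      rw [HahnSeries.coeff_mul]
      exact TwoSidedIdeal.finsetSum_mem _ _ _ fun ij _ => Q.mul_mem_right _ _ (hx ij.1))

lemma mem_coeffIdeal {Q : TwoSidedIdeal S} {f : LaurentSeries S} :
    f ∈ coeffIdeal Q ↔ ∀ n : ℤ, f.coeff n ∈ Q :=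
  TwoSidedIdeal.mem_mk' _ _ _ _ _ _ _

lemma coeffIdeal_prime {Q : TwoSidedIdeal S} (hQ : IsPrimeTwoSidedIdeal Q) :
    IsPrimeTwoSidedIdeal (coeffIdeal Q) := by
  constructor
  · intro h
    have h1 : (1 : LaurentSeries S) ∈ coeffIdeal Q := h ▸ TwoSidedIdeal.mem_top _
    have h2 := mem_coeffIdeal.mp h1 0
    rw [HahnSeries.coeff_one] at h2
    simp only [if_pos rfl] at h2
    exact hQ.1 (TwoSidedIdeal.eq_top _ h2)
  · intro a b hab
    by_contra hcon
    push_neg at hcon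
    obtain ⟨ha, hb⟩ := hcon
    rw [mem_coeffIdeal] at ha hb
    push_neg at ha hb
    -- minimal bad coefficient of a
    set T : Set ℤ := {i | a.coeff i ∉ Q} with hT
    have hTsub : T ⊆ a.support := by
      intro i hi
      simp only [HahnSeries.mem_support]
      intro h0
      exact hi (h0 ▸ Q.zero_mem)
    have hTwf : T.IsWF := a.isWF_support.mono hTsub
    have hTne : T.Nonempty := ha
    set m := hTwf.min hTne with hmdef
    have hm : a.coeff m ∉ Q := hTwf.min_mem hTne
    have hmin : ∀ i : ℤ, i < m → a.coeff i ∈ Q := by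
      intro i hi
      by_contra hq
      exact hTwf.not_lt_min hTne hq hi
    -- minimal bad coefficient of b
    set T' : Set ℤ := {i | b.coeff i ∉ Q} with hT'
    have hTsub' : T' ⊆ b.support := by
      intro i hi
      simp only [HahnSeries.mem_support]
      intro h0
      exact hi (h0 ▸ Q.zero_mem)
    have hTwf' : T'.IsWF := b.isWF_support.mono hTsub'
    have hTne' : T'.Nonempty := hb
    set n' := hTwf'.min hTne' with hndef
    have hn : b.coeff n' ∉ Q := hTwf'.min_mem hTne'
    have hmin' : ∀ i : ℤ, i < n' → b.coeff i ∈ Q := by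
      intro i hi
      by_contra hq
      exact hTwf'.not_lt_min hTne' hq hi
    -- get r from primality of Q
    have hex0 : ¬ ∀ r : S, a.coeff m * r * b.coeff n' ∈ Q := by
      intro hall
      rcases hQ.2 _ _ hall with h | h
      · exact hm h
      · exact hn h
    push_neg at hex0
    obtain ⟨r, hr⟩ := hex0
    -- compute the coefficient of a * single 0 r * b at m + n'
    have hmem := mem_coeffIdeal.mp (hab (HahnSeries.single (0 : ℤ) r)) (m + n')
    set c : LaurentSeries S := a * HahnSeries.single (0 : ℤ) r with hc
    have hcoeffc : ∀ i : ℤ, c.coeff i = a.coeff i * r := fun i =>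
      HahnSeries.coeff_mul_single_zero
    have hexp : (c * b).coeff (m + n') =
        ∑ ij ∈ Finset.addAntidiagonal c.isPWO_support b.isPWO_support (m + n'),
          c.coeff ij.1 * b.coeff ij.2 := HahnSeries.coeff_mul
    have hprodne : a.coeff m * r * b.coeff n' ≠ 0 := fun h => hr (h ▸ Q.zero_mem)
    have hmS : m ∈ c.support := by
      simp only [HahnSeries.mem_support, hcoeffc]
      intro h0
      exact hprodne (by rw [h0, zero_mul])
    have hnS : n' ∈ b.support := by
      simp only [HahnSeries.mem_support]
      intro h0
      exact hn (h0 ▸ Q.zero_mem)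
    have hpair : ((m, n') : ℤ × ℤ) ∈
        Finset.addAntidiagonal c.isPWO_support b.isPWO_support (m + n') := by
      rw [Finset.addAntidiagonal, Finset.mem_antidiagonal]
      exact ⟨hmS, hnS, rfl⟩
    have hsum := Finset.add_sum_erase _ (fun ij : ℤ × ℤ => c.coeff ij.1 * b.coeff ij.2) hpair
    have hothers :
        (∑ ij ∈ (Finset.addAntidiagonal c.isPWO_support b.isPWO_support (m + n')).erase (m, n'),
          c.coeff ij.1 * b.coeff ij.2) ∈ Q := by
      apply TwoSidedIdeal.finsetSum_mem
      intro ij hij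
      obtain ⟨hne, hij'⟩ := Finset.mem_erase.mp hij
      rw [Finset.addAntidiagonal, Finset.mem_antidiagonal] at hij'
      obtain ⟨h1, h2, h3⟩ := hij'
      rcases lt_trichotomy ij.1 m with h | h | h
      · refine Q.mul_mem_right _ _ ?_
        rw [hcoeffc]
        exact Q.mul_mem_right _ _ (hmin _ h)
      · exfalso
        apply hne
        have h4 : ij.2 = n' := by omega
        exact Prod.ext h h4
      · have h4 : ij.2 < n' := by omega
        exact Q.mul_mem_left _ _ (hmin' _ h4)
    apply hr
    have heq : a.coeff m * r * b.coeff n' =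
        (c * b).coeff (m + n') -
        ∑ ij ∈ (Finset.addAntidiagonal c.isPWO_support b.isPWO_support (m + n')).erase (m, n'),
          c.coeff ij.1 * b.coeff ij.2 := by
      rw [hexp, ← hsum]
      simp [hcoeffc]
    rw [heq]
    exact Q.sub_mem hmem hothers

/-- Well-foundedness of `>` on two-sided ideals, from one-sided Noetherianity. -/
lemma twoSidedIdeal_wf (hN : IsNoetherianRing S ∨ IsNoetherianRing Sᵐᵒᵖ) :
    WellFounded ((· > ·) : TwoSidedIdeal S → TwoSidedIdeal S → Prop) := by
  rcases hN with h | h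
  · haveI := h
    have hw : WellFounded ((· > ·) : Ideal S → Ideal S → Prop) := wellFounded_gt
    refine Subrelation.wf ?_ (InvImage.wf (TwoSidedIdeal.asIdeal (R := S)) hw)
    intro I J hIJ
    refine lt_of_le_of_ne (TwoSidedIdeal.asIdeal.monotone hIJ.le) ?_
    intro he
    refine hIJ.ne (SetLike.ext fun x => ?_)
    rw [← TwoSidedIdeal.mem_asIdeal (I := J), he, TwoSidedIdeal.mem_asIdeal]
  · haveI := h
    have hw : WellFounded ((· > ·) : Ideal Sᵐᵒᵖ → Ideal Sᵐᵒᵖ → Prop) := wellFounded_gt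
    refine Subrelation.wf ?_ (InvImage.wf (TwoSidedIdeal.asIdealOpposite (R := S)) hw)
    intro I J hIJ
    refine lt_of_le_of_ne (TwoSidedIdeal.asIdealOpposite.monotone hIJ.le) ?_
    intro he
    refine hIJ.ne (SetLike.ext fun x => ?_)
    constructor
    · intro hx
      have hx' : MulOpposite.op x ∈ TwoSidedIdeal.asIdealOpposite J :=
        TwoSidedIdeal.mem_asIdealOpposite.mpr (by simpa using hx)
      rw [he] at hx'
      simpa using TwoSidedIdeal.mem_asIdealOpposite.mp hx'
    · intro hx
      have hx' : MulOpposite.op x ∈ TwoSidedIdeal.asIdealOpposite I :=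
        TwoSidedIdeal.mem_asIdealOpposite.mpr (by simpa using hx)
      rw [← he] at hx'
      simpa using TwoSidedIdeal.mem_asIdealOpposite.mp hx'

lemma forall₂_append_split {α β : Type*} {r : α → β → Prop} :
    ∀ {L₁ : List β} {xs : List α} {L₂ : List β}, List.Forall₂ r xs (L₁ ++ L₂) →
      ∃ x₁ x₂, xs = x₁ ++ x₂ ∧ List.Forall₂ r x₁ L₁ ∧ List.Forall₂ r x₂ L₂ := by
  intro L₁
  induction L₁ with
  | nil => exact fun {xs L₂} h => ⟨[], xs, rfl, List.Forall₂.nil, by simpa using h⟩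
  | cons P L₁ ih =>
    intro xs L₂ h
    rw [List.cons_append] at h
    cases h with
    | cons hx h' =>
      obtain ⟨x₁, x₂, rfl, h₁, h₂⟩ := ih h'
      exact ⟨_ :: x₁, x₂, rfl, List.Forall₂.cons hx h₁, h₂⟩

/-- Every proper two-sided ideal of a ring with ACC on two-sided ideals contains a finite
nonempty product of prime two-sided ideals containing it (elementwise version). -/
lemma exists_prime_list
    (wf : WellFounded ((· > ·) : TwoSidedIdeal S → TwoSidedIdeal S → Prop)) :
    ∀ I : TwoSidedIdeal S, I ≠ ⊤ →
      ∃ L : List (TwoSidedIdeal S), L ≠ [] ∧ (∀ P ∈ L, IsPrimeTwoSidedIdeal P ∧ I ≤ P) ∧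
        ∀ xs : List S, List.Forall₂ (· ∈ ·) xs L → xs.prod ∈ I := by
  intro I₀
  induction I₀ using WellFounded.induction wf with
  | _ I IH => ?_
  intro hI
  by_cases hprime : IsPrimeTwoSidedIdeal I
  · refine ⟨[I], by simp, by simp [hprime], fun xs hxs => ?_⟩
    cases hxs with
    | cons hx hnil =>
      cases hnil
      simpa using hx
  · have hex : ∃ a b : S, (∀ r : S, a * r * b ∈ I) ∧ a ∉ I ∧ b ∉ I := by
      unfold IsPrimeTwoSidedIdeal at hprime
      push_neg at hprime
      obtain ⟨a, b, h1, h2, h3⟩ := hprime hI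
      exact ⟨a, b, h1, h2, h3⟩
    obtain ⟨a, b, hab, ha, hb⟩ := hex
    set Ja : TwoSidedIdeal S := TwoSidedIdeal.span ((I : Set S) ∪ {a}) with hJa
    set Jb : TwoSidedIdeal S := TwoSidedIdeal.span ((I : Set S) ∪ {b}) with hJb
    have haJa : a ∈ Ja := TwoSidedIdeal.subset_span (Or.inr rfl)
    have hbJb : b ∈ Jb := TwoSidedIdeal.subset_span (Or.inr rfl)
    have hIJa : I ≤ Ja := fun x hx => TwoSidedIdeal.subset_span (Or.inl hx)
    have hIJb : I ≤ Jb := fun x hx => TwoSidedIdeal.subset_span (Or.inl hx)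
    -- key multiplicative lemma
    have keyb : ∀ v ∈ Jb, ∀ s : S, a * (s * v) ∈ I := by
      intro v hv
      let K' : TwoSidedIdeal S := TwoSidedIdeal.mk' {w | ∀ s : S, a * (s * w) ∈ I}
        (fun s => by simpa using I.zero_mem)
        (fun {x y} hx hy s => by
          have : a * (s * (x + y)) = a * (s * x) + a * (s * y) := by noncomm_ring
          rw [this]; exact I.add_mem (hx s) (hy s))
        (fun {x} hx s => by
          have : a * (s * (-x)) = -(a * (s * x)) := by noncomm_ring
          rw [this]; exact I.neg_mem (hx s))
        (fun {x y} hy s => by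
          have : a * (s * (x * y)) = a * ((s * x) * y) := by noncomm_ring
          rw [this]; exact hy (s * x))
        (fun {x y} hx s => by
          have : a * (s * (x * y)) = (a * (s * x)) * y := by noncomm_ring
          rw [this]; exact I.mul_mem_right _ _ (hx s))
      have hK'mem : ∀ {w : S}, w ∈ K' ↔ ∀ s : S, a * (s * w) ∈ I := fun {w} =>
        TwoSidedIdeal.mem_mk' _ _ _ _ _ _ _
      have hsub : (I : Set S) ∪ {b} ⊆ (K' : Set S) := by
        rintro x (hx | rfl)
        · refine SetLike.mem_coe.mpr (hK'mem.mpr fun s => ?_)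
          exact I.mul_mem_left _ _ (I.mul_mem_left _ _ hx)
        · refine SetLike.mem_coe.mpr (hK'mem.mpr fun s => ?_)
          have : a * (s * x) = a * s * x := by noncomm_ring
          rw [this]; exact hab s
      exact hK'mem.mp (TwoSidedIdeal.mem_span_iff.mp hv K' hsub)
    have key : ∀ u ∈ Ja, ∀ v ∈ Jb, u * v ∈ I := by
      intro u hu
      let K : TwoSidedIdeal S := TwoSidedIdeal.mk' {w | ∀ v ∈ Jb, w * v ∈ I}
        (fun v _ => by simpa using I.zero_mem)
        (fun {x y} hx hy v hv => by
          rw [add_mul]; exact I.add_mem (hx v hv) (hy v hv))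
        (fun {x} hx v hv => by
          rw [neg_mul]; exact I.neg_mem (hx v hv))
        (fun {x y} hy v hv => by
          rw [mul_assoc]; exact I.mul_mem_left _ _ (hy v hv))
        (fun {x y} hx v hv => by
          rw [mul_assoc]; exact hx _ (Jb.mul_mem_left _ _ hv))
      have hKmem : ∀ {w : S}, w ∈ K ↔ ∀ v ∈ Jb, w * v ∈ I := fun {w} =>
        TwoSidedIdeal.mem_mk' _ _ _ _ _ _ _
      have hsub : (I : Set S) ∪ {a} ⊆ (K : Set S) := by
        rintro x (hx | rfl)
        · refine SetLike.mem_coe.mpr (hKmem.mpr fun v hv => ?_)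
          exact I.mul_mem_right _ _ hx
        · refine SetLike.mem_coe.mpr (hKmem.mpr fun v hv => ?_)
          have : x * v = x * (1 * v) := by noncomm_ring
          rw [this]; exact keyb v hv 1
      exact hKmem.mp (TwoSidedIdeal.mem_span_iff.mp hu K hsub)
    have hJa_gt : Ja > I := lt_iff_le_not_ge.mpr ⟨hIJa, fun hle => ha (hle haJa)⟩
    have hJb_gt : Jb > I := lt_iff_le_not_ge.mpr ⟨hIJb, fun hle => hb (hle hbJb)⟩
    have hJa_ne : Ja ≠ ⊤ := by
      intro h
      have h1 : (1 : S) ∈ Ja := h ▸ TwoSidedIdeal.mem_top _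
      have := key 1 h1 b hbJb
      rw [one_mul] at this
      exact hb this
    have hJb_ne : Jb ≠ ⊤ := by
      intro h
      have h1 : (1 : S) ∈ Jb := h ▸ TwoSidedIdeal.mem_top _
      have := key a haJa 1 h1
      rw [mul_one] at this
      exact ha this
    obtain ⟨La, hane, haP, haprod⟩ := IH Ja hJa_gt hJa_ne
    obtain ⟨Lb, hbne, hbP, hbprod⟩ := IH Jb hJb_gt hJb_ne
    refine ⟨La ++ Lb, by simp [hane], ?_, ?_⟩
    · intro P hP
      rcases List.mem_append.mp hP with h | h
      · exact ⟨(haP P h).1, le_trans hIJa (haP P h).2⟩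
      · exact ⟨(hbP P h).1, le_trans hIJb (hbP P h).2⟩
    · intro xs hxs
      obtain ⟨x₁, x₂, rfl, h₁, h₂⟩ := forall₂_append_split hxs
      rw [List.prod_append]
      exact key _ (haprod x₁ h₁) _ (hbprod x₂ h₂)

lemma exists_nilpotency [Nontrivial S]
    (wf : WellFounded ((· > ·) : TwoSidedIdeal S → TwoSidedIdeal S → Prop)) :
    ∃ k : ℕ, 0 < k ∧ ∀ xs : List S, xs.length = k →
      (∀ x ∈ xs, x ∈ primeRadicalSet S) → xs.prod = 0 := by
  have hbot : (⊥ : TwoSidedIdeal S) ≠ ⊤ := by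
    intro h
    have h1 : (1 : S) ∈ (⊥ : TwoSidedIdeal S) := h ▸ TwoSidedIdeal.mem_top _
    rw [TwoSidedIdeal.mem_bot] at h1
    exact one_ne_zero h1
  obtain ⟨L, hne, hP, hprod⟩ := exists_prime_list wf ⊥ hbot
  refine ⟨L.length, List.length_pos_iff.mpr hne, fun xs hlen hmem => ?_⟩
  have hf : List.Forall₂ (· ∈ ·) xs L := by
    refine List.forall₂_of_length_eq_of_get hlen fun i h₁ h₂ => ?_
    exact mem_primeRadicalSet_iff.mp (hmem _ (xs.get_mem _)) _ (hP _ (L.get_mem _)).1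
  have := hprod xs hf
  rwa [TwoSidedIdeal.mem_bot] at this

/-- Additive closure of `j`-fold products of elements of the prime radical. -/
def nilClosure (S : Type*) [Ring S] (j : ℕ) : AddSubgroup S :=
  AddSubgroup.closure {r | ∃ xs : List S, xs.length = j ∧
    (∀ x ∈ xs, x ∈ primeRadicalSet S) ∧ xs.prod = r}

lemma mul_mem_nilClosure {j : ℕ} {x c : S} (hx : x ∈ primeRadicalSet S)
    (hc : c ∈ nilClosure S j) : x * c ∈ nilClosure S (j + 1) := by
  refine AddSubgroup.closure_induction ?_ ?_ ?_ ?_ hc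
  · rintro r ⟨xs, hlen, hmem, rfl⟩
    refine AddSubgroup.subset_closure ⟨x :: xs, by simp [hlen], ?_, by rw [List.prod_cons]⟩
    intro y hy
    rcases List.mem_cons.mp hy with rfl | hy
    · exact hx
    · exact hmem y hy
  · rw [mul_zero]; exact (nilClosure S (j + 1)).zero_mem
  · intro u v _ _ hu hv
    rw [mul_add]; exact (nilClosure S (j + 1)).add_mem hu hv
  · intro u _ hu
    rw [mul_neg]; exact (nilClosure S (j + 1)).neg_mem hu

lemma nilClosure_eq_zero {k : ℕ}
    (hk : ∀ xs : List S, xs.length = k → (∀ x ∈ xs, x ∈ primeRadicalSet S) → xs.prod = 0) :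
    ∀ c ∈ nilClosure S k, c = 0 := by
  intro c hc
  refine AddSubgroup.closure_induction ?_ rfl ?_ ?_ hc
  · rintro r ⟨xs, hlen, hmem, rfl⟩
    exact hk xs hlen hmem
  · intro u v _ _ hu hv
    rw [hu, hv, add_zero]
  · intro u _ hu
    rw [hu, neg_zero]

lemma prod_coeff_mem_nilClosure (gs : List (LaurentSeries S))
    (hgs : ∀ g ∈ gs, ∀ n : ℤ, g.coeff n ∈ primeRadicalSet S) :
    ∀ n : ℤ, (gs.prod).coeff n ∈ nilClosure S gs.length := by
  induction gs with
  | nil =>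
    intro n
    rw [List.prod_nil]
    rcases eq_or_ne n 0 with rfl | h
    · rw [HahnSeries.coeff_one, if_pos rfl]
      exact AddSubgroup.subset_closure ⟨[], rfl, by simp, List.prod_nil⟩
    · rw [HahnSeries.coeff_one, if_neg h]
      exact (nilClosure S 0).zero_mem
  | cons g gs ih =>
    intro n
    rw [List.prod_cons, HahnSeries.coeff_mul]
    refine AddSubgroup.sum_mem _ fun ij _ => ?_
    have h1 : g.coeff ij.1 ∈ primeRadicalSet S := hgs g (by simp) ij.1
    have h2 : (gs.prod).coeff ij.2 ∈ nilClosure S gs.length :=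
      ih (fun g' hg' => hgs g' (by simp [hg'])) ij.2
    simpa [List.length_cons] using mul_mem_nilClosure h1 h2

lemma prod_eq_zero_of_coeffs {k : ℕ}
    (hk : ∀ xs : List S, xs.length = k → (∀ x ∈ xs, x ∈ primeRadicalSet S) → xs.prod = 0)
    (gs : List (LaurentSeries S)) (hlen : k ≤ gs.length)
    (hgs : ∀ g ∈ gs, ∀ n : ℤ, g.coeff n ∈ primeRadicalSet S) :
    gs.prod = 0 := by
  have h1 : (gs.take k).prod = 0 := by
    ext n
    have hmem := prod_coeff_mem_nilClosure (gs.take k)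
      (fun g hg => hgs g (List.take_subset k gs hg)) n
    rw [List.length_take, min_eq_left hlen] at hmem
    simpa using nilClosure_eq_zero hk _ hmem
  calc gs.prod = (gs.take k).prod * (gs.drop k).prod := by
        rw [← List.prod_append, List.take_append_drop]
    _ = 0 := by rw [h1, zero_mul]

lemma reverse_inclusion
    (wf : WellFounded ((· > ·) : TwoSidedIdeal S → TwoSidedIdeal S → Prop))
    {f : LaurentSeries S} (hf : ∀ n : ℤ, f.coeff n ∈ primeRadicalSet S) :
    f ∈ primeRadicalSet (LaurentSeries S) := by
  rw [mem_primeRadicalSet_iff]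
  intro P' hP'
  by_contra hfP
  rcases subsingleton_or_nontrivial S with h | h
  · refine hfP ?_
    have hf0 : f = 0 := by
      ext n
      exact Subsingleton.elim _ _
    rw [hf0]
    exact P'.zero_mem
  · obtain ⟨k, hkpos, hk⟩ := exists_nilpotency wf
    have claim : ∀ j : ℕ, ∃ xs : List (LaurentSeries S), xs ≠ [] ∧
        (∀ x ∈ xs, ∀ n : ℤ, x.coeff n ∈ primeRadicalSet S) ∧ j ≤ xs.length ∧
        xs.prod ∉ P' := by
      intro j
      induction j with
      | zero =>
        exact ⟨[f], by simp, by simpa using hf, by simp, by simpa using hfP⟩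
      | succ j ihj =>
        obtain ⟨xs, hne, hmem, hlen, hprodP⟩ := ihj
        have hexr : ¬ ∀ r : LaurentSeries S, xs.prod * r * xs.prod ∈ P' := by
          intro hall
          rcases hP'.2 _ _ hall with h' | h' <;> exact hprodP h'
        push_neg at hexr
        obtain ⟨r, hr⟩ := hexr
        obtain ⟨x, t, rfl⟩ := List.exists_cons_of_ne_nil hne
        refine ⟨(x :: t) ++ ((r * x) :: t), by simp, ?_, ?_, ?_⟩
        · intro y hy
          rcases List.mem_append.mp hy with h' | h'
          · exact hmem y h'
          · rcases List.mem_cons.mp h' with rfl | h'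
            · intro n
              have hx' : x ∈ coeffIdeal (pradIdeal S) :=
                mem_coeffIdeal.mpr fun n => mem_pradIdeal.mpr (hmem x (by simp) n)
              have : r * x ∈ coeffIdeal (pradIdeal S) :=
                (coeffIdeal (pradIdeal S)).mul_mem_left r x hx'
              exact mem_pradIdeal.mp (mem_coeffIdeal.mp this n)
            · exact hmem y (by simp [h'])
        · simp only [List.length_append, List.length_cons] at hlen ⊢
          omega
        · have hpe : ((x :: t) ++ ((r * x) :: t)).prod =
              (x :: t).prod * r * (x :: t).prod := by
            simp only [List.prod_append, List.prod_cons, mul_assoc]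
          rw [hpe]
          exact hr
    obtain ⟨xs, hne, hmem, hlen, hprodP⟩ := claim k
    refine hprodP ?_
    rw [prod_eq_zero_of_coeffs hk xs hlen hmem]
    exact P'.zero_mem

end Aux

/-- Let `R` be a left or right Noetherian ring.  Then the prime
radical of the Laurent series ring `R((x))` consists exactly of the Laurent series
all of whose coefficients lie in the prime radical of `R`:
`P(R((x))) = P(R)((x))`. -/
theorem primeRadical_laurentSeries
    {R : Type*} [Ring R] (hN : IsNoetherianRing R ∨ IsNoetherianRing Rᵐᵒᵖ) :
    primeRadicalSet (LaurentSeries R) =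
      {f : LaurentSeries R | ∀ n : ℤ, f.coeff n ∈ primeRadicalSet R} := by
  ext f
  constructor
  · intro hf n
    rw [mem_primeRadicalSet_iff]
    intro Q hQ
    have hfQ : f ∈ coeffIdeal Q :=
      mem_primeRadicalSet_iff.mp hf _ (coeffIdeal_prime hQ)
    exact mem_coeffIdeal.mp hfQ n
  · intro hf
    exact reverse_inclusion (twoSidedIdeal_wf hN) hf
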